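/- Let n = sl_3(ℂ) with basis e1 = E12, e2 = E13, e3 = E21, e4 = E23, e5 = E31, e6 = E32, e7 = E11 − E22, e8 = E22 − E33 (where E_{ij} is the elementary matrix) and bracket {x, y} = xy − yx. Let φ be the linear map on sl_3(ℂ) determined by φ(e3) = −e3 − e7, φ(e4) = −e4 − e5, and φ(e_i) = 0 for i = 1, 2, 5, 6, 7, 8, and define the bilinear product x·y = {φ(x), y}. Then, with the bracket [x, y] := x·y − y·x + {x, y}, the pair (g, n) = ((sl_3(ℂ), [·,·]), sl_3(ℂ)) forms a pair of Lie algebras on the same vector space, x·y is a post-Lie algebra structure on (g, n), and g is isomorphic as a Lie algebra to aff_2(ℂ) ⊕ aff_1(ℂ). In particular, there exists a post-Lie algebra structure on a pair (g, n) with g complete non-semisimple and n simple. -/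
import Mathlib


noncomputable section

/-- A map `V → V → V` is ℂ-bilinear. -/
def IsBilin {V : Type*} [AddCommGroup V] [Module ℂ V] (f : V → V → V) : Prop :=
  (∀ (a : ℂ) (x y z : V), f (a • x + y) z = a • f x z + f y z) ∧
  (∀ (a : ℂ) (x y z : V), f x (a • y + z) = a • f x y + f x z)

/-- `f` is a Lie bracket on the complex vector space `V`. -/
def IsLieBracket {V : Type*} [AddCommGroup V] [Module ℂ V] (f : V → V → V) : Prop :=
  IsBilin f ∧ (∀ x, f x x = 0) ∧
  ∀ x y z, f x (f y z) + f y (f z x) + f z (f x y) = 0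

/-- `p` is a post-Lie algebra structure on the pair of Lie brackets `(g, n)` on `V`. -/
def IsPostLieStruct {V : Type*} [AddCommGroup V] [Module ℂ V]
    (g n p : V → V → V) : Prop :=
  IsBilin p ∧
  (∀ x y, p x y - p y x = g x y - n x y) ∧
  (∀ x y z, p (g x y) z = p x (p y z) - p y (p x z)) ∧
  (∀ x y z, p x (n y z) = n (p x y) z + n y (p x z))

/-- The Lie algebras `(V, g)` and `(W, h)` are isomorphic. -/
def LieBracketIso {V W : Type*} [AddCommGroup V] [Module ℂ V] [AddCommGroup W]
    [Module ℂ W] (g : V → V → V) (h : W → W → W) : Prop :=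
  ∃ e : V ≃ₗ[ℂ] W, ∀ x y, e (g x y) = h (e x) (e y)

/-- The bracket of `n = sl₃(ℂ)` on `ℂ⁸` in the basis
`e₁ = E₁₂, e₂ = E₁₃, e₃ = E₂₁, e₄ = E₂₃, e₅ = E₃₁, e₆ = E₃₂,
e₇ = E₁₁ - E₂₂, e₈ = E₂₂ - E₃₃` (coordinates `0, …, 7`), i.e. the structure
constants of `{x, y} = xy - yx` on `sl₃(ℂ)`. -/
def sl3Bracket (x y : Fin 8 → ℂ) : Fin 8 → ℂ :=
  let c : Fin 8 → Fin 8 → ℂ := fun i j => x i * y j - x j * y i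
  ![-2 * c 0 6 + c 0 7 + c 1 5,
    c 0 3 - c 1 6 - c 1 7,
    2 * c 2 6 - c 2 7 + c 3 4,
    -c 1 2 + c 3 6 - 2 * c 3 7,
    -c 2 5 + c 4 6 + c 4 7,
    -c 0 4 - c 5 6 + 2 * c 5 7,
    c 0 2 + c 1 4,
    c 1 4 + c 3 5]

/-- The linear map `φ` on `sl₃(ℂ)` determined by `φ(e₃) = -e₃ - e₇`,
`φ(e₄) = -e₄ - e₅`, and `φ(eᵢ) = 0` for `i = 1, 2, 5, 6, 7, 8`. -/
def sl3Phi (x : Fin 8 → ℂ) : Fin 8 → ℂ :=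
  ![0, 0, -x 2, -x 3, -x 3, 0, -x 2, 0]

/-- The product `x · y = {φ(x), y}`. -/
def sl3Product (x y : Fin 8 → ℂ) : Fin 8 → ℂ :=
  sl3Bracket (sl3Phi x) y

/-- The bracket `[x, y] := x · y - y · x + {x, y}` of `g`. -/
def gBracket (x y : Fin 8 → ℂ) : Fin 8 → ℂ :=
  sl3Product x y - sl3Product y x + sl3Bracket x y

/-- The bracket of `aff₂(ℂ) ⊕ aff₁(ℂ)` on `ℂ⁸` in the basis `(f₁, …, f₈)` with
`[f₁,f₂] = f₂`, `[f₁,f₃] = -f₃`, `[f₁,f₅] = f₅`, `[f₂,f₃] = f₁ - f₄`,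
`[f₂,f₄] = f₂`, `[f₂,f₆] = f₅`, `[f₃,f₄] = -f₃`, `[f₃,f₅] = f₆`, `[f₄,f₆] = f₆`,
`[f₇,f₈] = f₇`, where `(f₁, …, f₆)` is the standard basis
`(E₁₁, E₁₂, E₂₁, E₂₂, E₁₃, E₂₃)` of `aff₂(ℂ)` and `(f₇, f₈)` is a basis of
`aff₁(ℂ)`. -/
def aff2aff1Bracket (u v : Fin 8 → ℂ) : Fin 8 → ℂ :=
  let d : Fin 8 → Fin 8 → ℂ := fun i j => u i * v j - u j * v i
  ![d 1 2,
    d 0 1 + d 1 3,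
    -d 0 2 - d 2 3,
    -d 1 2,
    d 0 4 + d 1 5,
    d 2 4 + d 3 5,
    d 6 7,
    0]


private lemma vget0 (a0 a1 a2 a3 a4 a5 a6 a7 : ℂ) :
    ![a0,a1,a2,a3,a4,a5,a6,a7] (0 : Fin 8) = a0 := rfl
private lemma vget1 (a0 a1 a2 a3 a4 a5 a6 a7 : ℂ) :
    ![a0,a1,a2,a3,a4,a5,a6,a7] (1 : Fin 8) = a1 := rfl
private lemma vget2 (a0 a1 a2 a3 a4 a5 a6 a7 : ℂ) :
    ![a0,a1,a2,a3,a4,a5,a6,a7] (2 : Fin 8) = a2 := rfl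
private lemma vget3 (a0 a1 a2 a3 a4 a5 a6 a7 : ℂ) :
    ![a0,a1,a2,a3,a4,a5,a6,a7] (3 : Fin 8) = a3 := rfl
private lemma vget4 (a0 a1 a2 a3 a4 a5 a6 a7 : ℂ) :
    ![a0,a1,a2,a3,a4,a5,a6,a7] (4 : Fin 8) = a4 := rfl
private lemma vget5 (a0 a1 a2 a3 a4 a5 a6 a7 : ℂ) :
    ![a0,a1,a2,a3,a4,a5,a6,a7] (5 : Fin 8) = a5 := rfl
private lemma vget6 (a0 a1 a2 a3 a4 a5 a6 a7 : ℂ) :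
    ![a0,a1,a2,a3,a4,a5,a6,a7] (6 : Fin 8) = a6 := rfl
private lemma vget7 (a0 a1 a2 a3 a4 a5 a6 a7 : ℂ) :
    ![a0,a1,a2,a3,a4,a5,a6,a7] (7 : Fin 8) = a7 := rfl

private lemma comp8 {f h : Fin 8 → ℂ} (H : ∀ i, f i = h i) : f = h := funext H

private lemma ext8 {f h : Fin 8 → ℂ}
    (h0 : f 0 = h 0) (h1 : f 1 = h 1) (h2 : f 2 = h 2) (h3 : f 3 = h 3)
    (h4 : f 4 = h 4) (h5 : f 5 = h 5) (h6 : f 6 = h 6) (h7 : f 7 = h 7) :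
    f = h := by
  funext i; fin_cases i <;> assumption

/-- The explicit isomorphism from `g` to `aff₂(ℂ) ⊕ aff₁(ℂ)`. -/
def theIso : (Fin 8 → ℂ) ≃ₗ[ℂ] (Fin 8 → ℂ) where
  toFun x := ![-2 * x 2 + 2 * x 6 - x 7, x 1, -x 3 + x 4, -x 2 + x 6 - 2 * x 7,
    x 0, x 5, x 3, -x 2]
  invFun u := ![u 4, u 1, -u 7, u 6, u 2 + u 6, u 5,
    (2/3) * u 0 - (1/3) * u 3 - u 7, (1/3) * u 0 - (2/3) * u 3]
  map_add' x y := by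
    apply ext8 <;> simp [vget0,vget1,vget2,vget3,vget4,vget5,vget6,vget7] <;> ring
  map_smul' a x := by
    apply ext8 <;> simp [vget0,vget1,vget2,vget3,vget4,vget5,vget6,vget7] <;> ring
  left_inv x := by
    apply ext8 <;> simp [vget0,vget1,vget2,vget3,vget4,vget5,vget6,vget7] <;> ring
  right_inv u := by
    apply ext8 <;> simp [vget0,vget1,vget2,vget3,vget4,vget5,vget6,vget7] <;> ring

set_option maxHeartbeats 4000000 in
/-- Let `n = sl₃(ℂ)` with the basis `(e₁, …, e₈)` above, let `φ` be
the linear map with `φ(e₃) = -e₃ - e₇`, `φ(e₄) = -e₄ - e₅`, `φ(eᵢ) = 0` otherwise,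
and set `x · y = {φ(x), y}` and `[x, y] := x · y - y · x + {x, y}`. Then `[·,·]` is a
Lie bracket, `(g, n) = ((ℂ⁸, [·,·]), sl₃(ℂ))` is a pair of Lie algebras on the same
vector space, `x · y` is a post-Lie algebra structure on `(g, n)`, and `g` is
isomorphic as a Lie algebra to `aff₂(ℂ) ⊕ aff₁(ℂ)`. (In particular there is a
post-Lie algebra structure on a pair `(g, n)` with `g` complete non-semisimple and
`n` simple.) -/
theorem postLie_on_aff2aff1_sl3 :
    IsLieBracket sl3Bracket ∧ IsLieBracket gBracket ∧
    IsPostLieStruct gBracket sl3Bracket sl3Product ∧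
    LieBracketIso gBracket aff2aff1Bracket := by

  refine ⟨⟨⟨fun a x y z => ?_, fun a x y z => ?_⟩, fun x => ?_, fun x y z => ?_⟩,
    ⟨⟨fun a x y z => ?_, fun a x y z => ?_⟩, fun x => ?_, fun x y z => ?_⟩,
    ⟨⟨fun a x y z => ?_, fun a x y z => ?_⟩, fun x y => ?_, fun x y z => ?_,
      fun x y z => ?_⟩,
    ⟨theIso, fun x y => ?_⟩⟩ <;>
  · apply ext8 <;>
    · simp only [sl3Bracket, gBracket, sl3Product, sl3Phi, aff2aff1Bracket, theIso,
        LinearEquiv.coe_mk, LinearMap.coe_mk, AddHom.coe_mk, Pi.add_apply, Pi.sub_apply,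
        Pi.smul_apply, smul_eq_mul, Pi.zero_apply, vget0, vget1, vget2, vget3, vget4, vget5, vget6, vget7]
      ring
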